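/- For the d-dimensional grid G = P □ ⋯ □ P (d factors), where P is a path with at least 3 vertices, χ(G²) ≤ 2d + 1; equivalently, G² has a proper colouring using colours {0,1,…,2d} given by c(v₁,…,v_d) ≡ Σ_{i=1}^d i·v_i (mod 2d+1), where vertices of P are identified with integers along the path. -/

import Mathlib

/-- The square of a graph: two distinct vertices are adjacent if they are
adjacent in `G` or have a common neighbour in `G`. -/
def SimpleGraph.square' {V : Type*} (G : SimpleGraph V) : SimpleGraph V where
  Adj u v := u ≠ v ∧ (G.Adj u v ∨ ∃ w, G.Adj u w ∧ G.Adj w v)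
  symm := ⟨fun u v => by
    rintro ⟨hne, h | ⟨w, h1, h2⟩⟩
    · exact ⟨hne.symm, Or.inl h.symm⟩
    · exact ⟨hne.symm, Or.inr ⟨w, h2.symm, h1.symm⟩⟩⟩
  loopless := ⟨fun u => by rintro ⟨hne, -⟩; exact hne rfl⟩

/-- The cartesian product of a family of graphs. -/
def boxProdPi {d : ℕ} {V : Fin d → Type*} (G : ∀ i, SimpleGraph (V i)) :
    SimpleGraph (∀ i, V i) where
  Adj u v := ∃ i, (G i).Adj (u i) (v i) ∧ ∀ j, j ≠ i → u j = v j
  symm := ⟨fun u v => by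
    rintro ⟨i, h, hj⟩
    exact ⟨i, h.symm, fun j hji => (hj j hji).symm⟩⟩
  loopless := ⟨fun u => by rintro ⟨i, h, -⟩; exact (G i).ne_of_adj h rfl⟩

private def T {d n : ℕ} (x : Fin d → Fin n) : ℤ := ∑ i : Fin d, ((i : ℤ) + 1) * (x i : ℤ)

private lemma step_lemma {d n : ℕ} {x y : Fin d → Fin n}
    (h : (boxProdPi (fun _ : Fin d => SimpleGraph.pathGraph n)).Adj x y) :
    ∃ i : Fin d, (∀ j, j ≠ i → x j = y j) ∧
      (((x i : ℕ) + 1 = (y i : ℕ) ∧ T y - T x = (i : ℤ) + 1) ∨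
       ((y i : ℕ) + 1 = (x i : ℕ) ∧ T x - T y = (i : ℤ) + 1)) := by
  obtain ⟨i, hadj, hj⟩ := h
  refine ⟨i, hj, ?_⟩
  have key : T y - T x = ((i : ℤ) + 1) * ((y i : ℤ) - (x i : ℤ)) := by
    unfold T
    rw [← Finset.sum_sub_distrib]
    rw [Finset.sum_eq_single i]
    · ring
    · intro j _ hji
      rw [hj j hji]; ring
    · simp
  rw [SimpleGraph.pathGraph_adj] at hadj
  rcases hadj with h1 | h1
  · left
    refine ⟨h1, ?_⟩
    have hv : (y i : ℤ) = (x i : ℤ) + 1 := by exact_mod_cast h1.symm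
    rw [key, hv]; ring
  · right
    refine ⟨h1, ?_⟩
    have hv : (x i : ℤ) = (y i : ℤ) + 1 := by exact_mod_cast h1.symm
    have : T y - T x = -((i : ℤ) + 1) := by rw [key, hv]; ring
    omega

theorem grid_square_colouring {d n : ℕ} (hn : 3 ≤ n) :
    (boxProdPi (fun _ : Fin d => SimpleGraph.pathGraph n)).square'.chromaticNumber
        ≤ ((2 * d + 1 : ℕ) : ℕ∞) ∧
      ∀ x y : Fin d → Fin n,
        (boxProdPi (fun _ : Fin d => SimpleGraph.pathGraph n)).square'.Adj x y →
          (∑ i : Fin d, ((i : ℕ) + 1) * (x i : ℕ)) % (2 * d + 1) ≠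
          (∑ i : Fin d, ((i : ℕ) + 1) * (y i : ℕ)) % (2 * d + 1) := by
  set G := (boxProdPi (fun _ : Fin d => SimpleGraph.pathGraph n)).square' with hG
  have main : ∀ x y : Fin d → Fin n, G.Adj x y →
      (∑ i : Fin d, ((i : ℕ) + 1) * (x i : ℕ)) % (2 * d + 1) ≠
      (∑ i : Fin d, ((i : ℕ) + 1) * (y i : ℕ)) % (2 * d + 1) := by
    intro x y hxy heq
    have hx : (T x) = ((∑ i : Fin d, ((i : ℕ) + 1) * (x i : ℕ) : ℕ) : ℤ) := by
      unfold T
      rw [Nat.cast_sum]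
      exact Finset.sum_congr rfl fun i _ => by push_cast; ring
    have hy : (T y) = ((∑ i : Fin d, ((i : ℕ) + 1) * (y i : ℕ) : ℕ) : ℤ) := by
      unfold T
      rw [Nat.cast_sum]
      exact Finset.sum_congr rfl fun i _ => by push_cast; ring
    have hdvd : ((2 * d + 1 : ℕ) : ℤ) ∣ T y - T x := by
      rw [hx, hy]
      refine Int.ModEq.dvd ?_
      rw [Int.ModEq, ← Int.natCast_mod, ← Int.natCast_mod, heq]
    have hsmall : T y - T x ≠ 0 ∧ -(2 * (d : ℤ)) ≤ T y - T x ∧ T y - T x ≤ 2 * d := by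
      obtain ⟨hne, hcase⟩ := hxy
      have key : ∀ i : Fin d, (1 : ℤ) ≤ (i : ℤ) + 1 ∧ (i : ℤ) + 1 ≤ d := by
        intro i
        have := i.isLt
        omega
      rcases hcase with h1 | ⟨w, h1, h2⟩
      · obtain ⟨i, hj, hc⟩ := step_lemma h1
        obtain ⟨hi1, hi2⟩ := key i
        rcases hc with ⟨-, hv⟩ | ⟨-, hv⟩ <;> refine ⟨by omega, by omega, by omega⟩
      · obtain ⟨i, hji, hci⟩ := step_lemma h1
        obtain ⟨k, hjk, hck⟩ := step_lemma h2
        obtain ⟨hi1, hi2⟩ := key i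
        obtain ⟨hk1, hk2⟩ := key k
        by_cases hik : i = k
        · subst hik
          rcases hci with ⟨hu, hv⟩ | ⟨hu, hv⟩ <;> rcases hck with ⟨hu', hv'⟩ | ⟨hu', hv'⟩
          · exact ⟨by omega, by omega, by omega⟩
          · exfalso
            apply hne
            funext j
            by_cases hji' : j = i
            · subst hji'
              exact Fin.val_injective (show (x j : ℕ) = (y j : ℕ) by omega)
            · rw [hji j hji', hjk j hji']
          · exfalso
            apply hne
            funext j
            by_cases hji' : j = i
            · subst hji'
              exact Fin.val_injective (show (x j : ℕ) = (y j : ℕ) by omega)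
            · rw [hji j hji', hjk j hji']
          · exact ⟨by omega, by omega, by omega⟩
        · have hik2 : ((i : ℕ) : ℤ) ≠ ((k : ℕ) : ℤ) := by
            intro hc
            exact hik (Fin.val_injective (by exact_mod_cast hc))
          rcases hci with ⟨-, hv⟩ | ⟨-, hv⟩ <;> rcases hck with ⟨-, hv'⟩ | ⟨-, hv'⟩ <;>
            exact ⟨by omega, by omega, by omega⟩
    have hz := Int.eq_zero_of_dvd_of_natAbs_lt_natAbs hdvd (by omega)
    exact hsmall.1 hz
  refine ⟨?_, main⟩
  have hm : 0 < 2 * d + 1 := by omega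
  have hcol : G.Colorable (2 * d + 1) := by
    refine ⟨SimpleGraph.Coloring.mk
      (fun x => ⟨(∑ i : Fin d, ((i : ℕ) + 1) * (x i : ℕ)) % (2 * d + 1), Nat.mod_lt _ hm⟩) ?_⟩
    intro x y hxy hceq
    exact main x y hxy (by simpa using congrArg Fin.val hceq)
  exact hcol.chromaticNumber_le
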